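/- Let f(x) = ∑_{m≥0} q^{C(m+1,2)} x^m and write 1/f(x) = ∑_{n≥0} u(n,q) x^n. Then for n ≥ 1, u(n,q) = -q^n · ∑_{j=0}^{n-1} (-1)^j · ⟨n-1, j⟩_q, where ⟨m, j⟩_q is the coefficient of x^{m-j} in f(x)^{j+1}. -/

import Mathlib

noncomputable def f : PowerSeries (Polynomial ℚ) :=
  PowerSeries.mk fun m => (Polynomial.X : Polynomial ℚ) ^ Nat.choose (m + 1) 2

noncomputable def angle (n k : ℕ) : Polynomial ℚ :=
  PowerSeries.coeff (n - k) (f ^ (k + 1))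

/-- `u(n,q)`, the coefficient of `x^n` in `1/f(x)`. -/
noncomputable def u (n : ℕ) : Polynomial ℚ :=
  PowerSeries.coeff n (PowerSeries.invOfUnit f 1)

open PowerSeries

lemma constantCoeff_f : constantCoeff f = 1 := by
  rw [← coeff_zero_eq_constantCoeff_apply]
  simp [f]

/-- Key functional equation: f(x) - 1 = q x f(q x). -/
lemma f_sub_one :
    f - 1 = PowerSeries.C Polynomial.X *
      (PowerSeries.X * rescale Polynomial.X f) := by
  ext n : 1
  cases n with
  | zero =>
      simp [f, coeff_zero_eq_constantCoeff_apply, constantCoeff_f]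
  | succ m =>
      rw [map_sub, coeff_C_mul, coeff_succ_X_mul, coeff_rescale]
      simp only [f, coeff_mk, coeff_one, Nat.succ_ne_zero, if_false, sub_zero]
      rw [← pow_add, ← pow_succ']
      congr 1
      have h : (m + 1 + 1).choose 2 = (m + 1).choose 1 + (m + 1).choose 2 :=
        Nat.choose_succ_succ (m + 1) 1
      rw [h, Nat.choose_one_right]
      omega

lemma one_sub_f :
    1 - f = PowerSeries.C (-Polynomial.X) *
      (PowerSeries.X * rescale Polynomial.X f) := by
  rw [map_neg, neg_mul, ← f_sub_one, neg_sub]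

lemma one_sub_f_pow (j : ℕ) :
    (1 - f) ^ j = PowerSeries.C ((-Polynomial.X) ^ j) *
      (PowerSeries.X ^ j * rescale Polynomial.X (f ^ j)) := by
  rw [one_sub_f, mul_pow, mul_pow, ← map_pow, ← map_pow]

lemma coeff_one_sub_f_pow (n j : ℕ) (hj : j ≤ n) :
    (PowerSeries.coeff n) ((1 - f) ^ j) =
      (-1) ^ j * Polynomial.X ^ n *
        PowerSeries.coeff (n - j) (f ^ j) := by
  rw [one_sub_f_pow, coeff_C_mul, coeff_X_pow_mul' _ j n, if_pos hj, coeff_rescale]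
  have hx : (Polynomial.X : Polynomial ℚ) ^ j * Polynomial.X ^ (n - j) =
      Polynomial.X ^ n := by
    rw [← pow_add]; congr 1; omega
  rw [← hx, neg_pow]
  ring

theorem reciprocal_coeff (n : ℕ) (hn : 1 ≤ n) :
    u n = -Polynomial.X ^ n * ∑ j ∈ Finset.range n, (-1) ^ j * angle (n - 1) j := by
  classical
  set g : PowerSeries (Polynomial ℚ) := 1 - f with hg
  set S : PowerSeries (Polynomial ℚ) := ∑ j ∈ Finset.range (n + 1), g ^ j with hS
  set v : PowerSeries (Polynomial ℚ) := PowerSeries.invOfUnit f 1 with hv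
  have hinv : f * v = 1 := by
    apply PowerSeries.mul_invOfUnit
    rw [constantCoeff_f]; rfl
  have hgeom := geom_sum_mul g (n + 1)
  have key : f * S = 1 - g ^ (n + 1) := by
    have h2 : g = 1 - f := hg
    rw [hS]
    linear_combination (∑ j ∈ Finset.range (n + 1), g ^ j) * h2 - hgeom
  have hSv : S = v - g ^ (n + 1) * v := by
    linear_combination key * v - S * hinv
  have hczero : (PowerSeries.coeff n) (g ^ (n + 1) * v) = 0 := by
    have hXdvd : (PowerSeries.X : PowerSeries (Polynomial ℚ)) ∣ g := by
      rw [PowerSeries.X_dvd_iff, hg, map_sub, constantCoeff_f, map_one, sub_self]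
    have hdvd : (PowerSeries.X : PowerSeries (Polynomial ℚ)) ^ (n + 1) ∣
        g ^ (n + 1) * v :=
      dvd_mul_of_dvd_left (pow_dvd_pow_of_dvd hXdvd _) _
    exact PowerSeries.X_pow_dvd_iff.mp hdvd n (Nat.lt_succ_self n)
  have hun : u n = PowerSeries.coeff n S := by
    rw [u, ← hv, hSv, map_sub, hczero, sub_zero]
  rw [hun, hS, map_sum]
  have hterm : ∀ j ∈ Finset.range (n + 1),
      (PowerSeries.coeff n) (g ^ j) =
        (-1) ^ j * Polynomial.X ^ n *
          PowerSeries.coeff (n - j) (f ^ j) := by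
    intro j hjmem
    exact coeff_one_sub_f_pow n j (Nat.lt_succ_iff.mp (Finset.mem_range.mp hjmem))
  rw [Finset.sum_congr rfl hterm, Finset.sum_range_succ']
  have h0 : (-1 : Polynomial ℚ) ^ 0 * Polynomial.X ^ n *
      PowerSeries.coeff (n - 0) (f ^ 0) = 0 := by
    simp only [pow_zero, one_mul, Nat.sub_zero, PowerSeries.coeff_one]
    rw [if_neg (by omega)]
    ring
  rw [h0, add_zero, Finset.mul_sum]
  apply Finset.sum_congr rfl
  intro j hj
  have hsub : n - (j + 1) = n - 1 - j := by omega
  rw [angle, hsub]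
  ring
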